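/- arXiv:2506.08465 — 2 statements merged into one kernel-verified Lean document; each statement's English description precedes it below -/
import Mathlib

section
/- Let T > 0, let c ≥ 1 + √(1 + 2T), and let g : [0,1] × [0,T] → ℝ be of class C¹ with |g| and its first derivatives bounded by a constant G. There exist a number λ₀ ≥ 1 and a constant C₂ > 0 (depending only on c, T, G) such that for every λ ≥ λ₀ and every pair of functions u, v : [0,1] × [0,T] → ℝ of class C² satisfying ∂ₓu(0,t) = ∂ₓu(1,t) = ∂ₓv(0,t) = ∂ₓv(1,t) = 0 for all t ∈ [0,T], the following quasi-Carleman estimate holds: ∫₀ᵀ∫₀¹ (∂ₜu − ∂ₓₓu + g ∂ₓₓv)² φ_λ² dx dt ≥ λ c^{λ−1} ∫₀ᵀ∫₀¹ (∂ₓu)² φ_λ² dx dt + (λ²/4) c^{2λ−2} ∫₀ᵀ∫₀¹ u² φ_λ² dx dt − C₂ λ (T+c)^λ ∫₀ᵀ∫₀¹ (∂ₓv)² φ_λ² dx dt − C₂ λ (T+c)^λ e^{2(T+c)^λ} ∫₀¹ u²(x,0) dx. -/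
open MeasureTheory intervalIntegral Set

noncomputable section CarlemanAux

/-- partial derivative in the first variable -/
def px (U : ℝ × ℝ → ℝ) (x t : ℝ) : ℝ := fderiv ℝ U (x, t) (1, 0)
/-- partial derivative in the second variable -/
def pt (U : ℝ × ℝ → ℝ) (x t : ℝ) : ℝ := fderiv ℝ U (x, t) (0, 1)
/-- second partial derivative in the first variable -/
def pxx (U : ℝ × ℝ → ℝ) (x t : ℝ) : ℝ := fderiv ℝ (fderiv ℝ U) (x, t) (1, 0) (1, 0)

variable {U : ℝ × ℝ → ℝ}

lemma hU21 (hU : ContDiff ℝ 2 U) : ContDiff ℝ 1 (fderiv ℝ U) := by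
  have h2 : ContDiff ℝ ((1 : ℕ) + 1) U := by exact_mod_cast hU
  exact ((contDiff_succ_iff_fderiv).mp h2).2.2

lemma hpx (hU : Differentiable ℝ U) (x t : ℝ) :
    HasDerivAt (fun y => U (y, t)) (px U x t) x :=
  (hU (x, t)).hasFDerivAt.comp_hasDerivAt x ((hasDerivAt_id x).prodMk (hasDerivAt_const x t))

lemma hpt (hU : Differentiable ℝ U) (x t : ℝ) :
    HasDerivAt (fun s => U (x, s)) (pt U x t) t :=
  (hU (x, t)).hasFDerivAt.comp_hasDerivAt t ((hasDerivAt_const t x).prodMk (hasDerivAt_id t))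

lemma hpxx (hU : ContDiff ℝ 2 U) (x t : ℝ) :
    HasDerivAt (fun y => px U y t) (pxx U x t) x := by
  have hF : Differentiable ℝ (fderiv ℝ U) := (hU21 hU).differentiable one_ne_zero
  have h : HasDerivAt (fun y => fderiv ℝ U (y, t)) (fderiv ℝ (fderiv ℝ U) (x, t) (1, 0)) x :=
    (hF (x, t)).hasFDerivAt.comp_hasDerivAt x ((hasDerivAt_id x).prodMk (hasDerivAt_const x t))
  simpa [px, pxx] using h.clm_apply (hasDerivAt_const x ((1 : ℝ), (0 : ℝ)))

lemma cont_px (hU : ContDiff ℝ 1 U) : Continuous fun p : ℝ × ℝ => px U p.1 p.2 := by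
  have := (contDiff_one_iff_fderiv.mp hU).2
  exact this.clm_apply (continuous_const (y := ((1:ℝ),(0:ℝ))))

lemma cont_pt (hU : ContDiff ℝ 1 U) : Continuous fun p : ℝ × ℝ => pt U p.1 p.2 := by
  have := (contDiff_one_iff_fderiv.mp hU).2
  exact this.clm_apply (continuous_const (y := ((0:ℝ),(1:ℝ))))

lemma cont_pxx (hU : ContDiff ℝ 2 U) : Continuous fun p : ℝ × ℝ => pxx U p.1 p.2 := by
  have := (contDiff_one_iff_fderiv.mp (hU21 hU)).2
  exact (this.clm_apply (continuous_const (y := ((1:ℝ),(0:ℝ))))).clm_apply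
    (continuous_const (y := ((1:ℝ),(0:ℝ))))

lemma cont_U (hU : ContDiff ℝ 1 U) : Continuous U := hU.continuous

end CarlemanAux

section Jtools
open intervalIntegral

variable {T : ℝ}

/-- inner integrability -/
lemma cintx {h : ℝ → ℝ → ℝ} (hh : Continuous fun p : ℝ × ℝ => h p.1 p.2) (t : ℝ) :
    IntervalIntegrable (fun x => h x t) volume 0 1 :=
  ((hh.comp (continuous_id.prodMk continuous_const)).intervalIntegrable 0 1)

lemma cintt {h : ℝ → ℝ → ℝ} (hh : Continuous fun p : ℝ × ℝ => h p.1 p.2) (x : ℝ) :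
    IntervalIntegrable (fun t => h x t) volume 0 T :=
  ((hh.comp (continuous_const.prodMk continuous_id)).intervalIntegrable 0 T)

lemma pcontt {h : ℝ → ℝ → ℝ} (hh : Continuous fun p : ℝ × ℝ => h p.1 p.2) :
    Continuous fun t => ∫ x in (0:ℝ)..1, h x t := by
  apply intervalIntegral.continuous_parametric_intervalIntegral_of_continuous'
    (f := fun t x => h x t) (μ := volume)
  exact hh.comp (continuous_snd.prodMk continuous_fst)

lemma pcontx {h : ℝ → ℝ → ℝ} (hh : Continuous fun p : ℝ × ℝ => h p.1 p.2) :
    Continuous fun x => ∫ t in (0:ℝ)..T, h x t := by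
  apply intervalIntegral.continuous_parametric_intervalIntegral_of_continuous'
    (f := fun x t => h x t) (μ := volume)
  exact hh

lemma Jint {h : ℝ → ℝ → ℝ} (hh : Continuous fun p : ℝ × ℝ => h p.1 p.2) :
    IntervalIntegrable (fun t => ∫ x in (0:ℝ)..1, h x t) volume 0 T :=
  (pcontt hh).intervalIntegrable 0 T

lemma Jadd {h k : ℝ → ℝ → ℝ} (hh : Continuous fun p : ℝ × ℝ => h p.1 p.2)
    (hk : Continuous fun p : ℝ × ℝ => k p.1 p.2) :
    (∫ t in (0:ℝ)..T, ∫ x in (0:ℝ)..1, (h x t + k x t)) =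
      (∫ t in (0:ℝ)..T, ∫ x in (0:ℝ)..1, h x t) +
        ∫ t in (0:ℝ)..T, ∫ x in (0:ℝ)..1, k x t := by
  have h1 : ∀ t : ℝ, (∫ x in (0:ℝ)..1, (h x t + k x t)) =
      (∫ x in (0:ℝ)..1, h x t) + ∫ x in (0:ℝ)..1, k x t :=
    fun t => integral_add (cintx hh t) (cintx hk t)
  simp only [h1]
  exact integral_add (Jint hh) (Jint hk)

lemma Jneg {h : ℝ → ℝ → ℝ} :
    (∫ t in (0:ℝ)..T, ∫ x in (0:ℝ)..1, (-(h x t))) =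
      -∫ t in (0:ℝ)..T, ∫ x in (0:ℝ)..1, h x t := by
  simp [intervalIntegral.integral_neg]

lemma Jsmul {h : ℝ → ℝ → ℝ} (r : ℝ) :
    (∫ t in (0:ℝ)..T, ∫ x in (0:ℝ)..1, r * h x t) =
      r * ∫ t in (0:ℝ)..T, ∫ x in (0:ℝ)..1, h x t := by
  simp [intervalIntegral.integral_const_mul]

lemma Jmono (hT : 0 ≤ T) {h k : ℝ → ℝ → ℝ}
    (hh : Continuous fun p : ℝ × ℝ => h p.1 p.2)
    (hk : Continuous fun p : ℝ × ℝ => k p.1 p.2)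
    (hle : ∀ x ∈ Icc (0:ℝ) 1, ∀ t ∈ Icc 0 T, h x t ≤ k x t) :
    (∫ t in (0:ℝ)..T, ∫ x in (0:ℝ)..1, h x t) ≤
      ∫ t in (0:ℝ)..T, ∫ x in (0:ℝ)..1, k x t := by
  apply integral_mono_on hT (Jint hh) (Jint hk)
  intro t ht
  exact integral_mono_on zero_le_one (cintx hh t) (cintx hk t)
    (fun x hx => hle x hx t ht)

lemma Jswap (hT : 0 ≤ T) {h : ℝ → ℝ → ℝ} (hh : Continuous fun p : ℝ × ℝ => h p.1 p.2) :
    (∫ x in (0:ℝ)..1, ∫ t in (0:ℝ)..T, h x t) =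
      ∫ t in (0:ℝ)..T, ∫ x in (0:ℝ)..1, h x t := by
  rw [integral_of_le hT, integral_of_le (zero_le_one' ℝ)]
  simp only [integral_of_le hT, integral_of_le (zero_le_one' ℝ)]
  apply MeasureTheory.integral_integral_swap
  rw [Function.uncurry_def, Measure.prod_restrict]
  apply MeasureTheory.IntegrableOn.mono_set
    (t := Icc (0:ℝ) 1 ×ˢ Icc (0:ℝ) T)
  · exact (hh.continuousOn).integrableOn_compact (isCompact_Icc.prod isCompact_Icc)
  · exact Set.prod_mono Ioc_subset_Icc_self Ioc_subset_Icc_self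

lemma ptwise1 (A W uu Ft F2 gg V2 : ℝ) (hW : 0 < W) :
    2 * A * W * (uu * Ft) + -(2 * A * W * (uu * F2)) + 2 * A * W * (uu * (gg * V2))
      + -(A ^ 2 * (uu ^ 2 * W)) ≤ (Ft - F2 + gg * V2) ^ 2 * W := by
  nlinarith [mul_nonneg (sq_nonneg (Ft - F2 + gg * V2 - A * uu)) hW.le]

lemma ptwise6 (G A W F1 uu V1 gg Gx : ℝ) (hg2 : gg ^ 2 ≤ G ^ 2) (hGx2 : Gx ^ 2 ≤ G ^ 2)
    (hA : 0 ≤ A) (hW : 0 < W) :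
    -(A * W * F1 ^ 2 + A ^ 2 / 2 * W * uu ^ 2 + (G ^ 2 * A + 2 * G ^ 2) * W * V1 ^ 2)
      ≤ (-(2 * A * W)) * (F1 * gg * V1 + uu * Gx * V1) := by
  nlinarith [mul_nonneg (mul_nonneg hA hW.le) (sq_nonneg (F1 - gg * V1)),
    mul_nonneg hW.le (sq_nonneg (A * uu - 2 * Gx * V1)),
    mul_nonneg (mul_nonneg (mul_nonneg hA hW.le) (sq_nonneg V1)) (sub_nonneg.mpr hg2),
    mul_nonneg (mul_nonneg hW.le (sq_nonneg V1)) (sub_nonneg.mpr hGx2)]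

lemma ptwise7 (G lam r1 r2 L A A' W F1 uu V1 : ℝ)
    (halo : lam * r1 ≤ A) (ha2 : lam ^ 2 * r2 ≤ A ^ 2) (ha'N : A' ≤ 0)
    (hahi : A ≤ L) (hone : 1 ≤ L) (haN : 0 ≤ A) (hW : 0 < W)
    (hr2 : 0 ≤ r2) (hG : 0 < G) (hlam : 0 ≤ lam) :
    lam * r1 * (F1 ^ 2 * W) + lam ^ 2 / 4 * r2 * (uu ^ 2 * W)
        + (-((3 * G ^ 2 + 1) * L)) * (V1 ^ 2 * W)
      ≤ (2 * A ^ 2 - A') * W * uu ^ 2 + 2 * A * W * F1 ^ 2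
        + -(A * W * F1 ^ 2 + A ^ 2 / 2 * W * uu ^ 2 + (G ^ 2 * A + 2 * G ^ 2) * W * V1 ^ 2)
        + -(A ^ 2 * (uu ^ 2 * W)) := by
  have hT1 : lam * r1 * (F1 ^ 2 * W) ≤ A * W * F1 ^ 2 := by
    nlinarith [halo, mul_nonneg (sq_nonneg F1) hW.le]
  have hT2 : lam ^ 2 / 4 * r2 * (uu ^ 2 * W) ≤ (A ^ 2 / 2 - A') * W * uu ^ 2 := by
    nlinarith [ha2, ha'N, mul_nonneg (sq_nonneg uu) hW.le,
      mul_nonneg (mul_nonneg (sq_nonneg lam) hr2) (mul_nonneg (sq_nonneg uu) hW.le)]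
  have hcoef : G ^ 2 * A + 2 * G ^ 2 ≤ (3 * G ^ 2 + 1) * L := by
    nlinarith [hahi, hone, sq_nonneg G, haN]
  have hT3 : (-((3 * G ^ 2 + 1) * L)) * (V1 ^ 2 * W)
      ≤ -((G ^ 2 * A + 2 * G ^ 2) * W * V1 ^ 2) := by
    nlinarith [hcoef, mul_nonneg (sq_nonneg V1) hW.le]
  linarith [hT1, hT2, hT3]

/-- The Carleman Weight Function `φ_λ(t) = exp((T − t + c)^λ)`. -/
noncomputable def carlemanWeight (T c lam t : ℝ) : ℝ := Real.exp ((T - t + c) ^ lam)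

set_option maxHeartbeats 2000000

/-- One-dimensional quasi-Carleman estimate for the operator `∂ₜ − ∂ₓₓ + g ∂ₓₓ` on
`(0,1) × (0,T)` with zero Neumann boundary conditions, where `g` is `C¹` with `|g|`
and its first derivatives bounded by `G`. -/
theorem stmt2 (T c G : ℝ) (hT : 0 < T) (hc : 1 + Real.sqrt (1 + 2 * T) ≤ c) (hG : 0 < G) :
    ∃ lam0 C2 : ℝ, 1 ≤ lam0 ∧ 0 < C2 ∧
      ∀ g : ℝ → ℝ → ℝ,
        ContDiff ℝ 1 (fun p : ℝ × ℝ => g p.1 p.2) →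
        (∀ x ∈ Set.Icc (0 : ℝ) 1, ∀ t ∈ Set.Icc (0 : ℝ) T,
          |g x t| ≤ G ∧ ‖fderiv ℝ (fun p : ℝ × ℝ => g p.1 p.2) (x, t)‖ ≤ G) →
        ∀ lam : ℝ, lam0 ≤ lam →
          ∀ u v : ℝ → ℝ → ℝ,
            ContDiff ℝ 2 (fun p : ℝ × ℝ => u p.1 p.2) →
            ContDiff ℝ 2 (fun p : ℝ × ℝ => v p.1 p.2) →
            (∀ t ∈ Set.Icc (0 : ℝ) T,
              deriv (fun x => u x t) 0 = 0 ∧ deriv (fun x => u x t) 1 = 0 ∧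
              deriv (fun x => v x t) 0 = 0 ∧ deriv (fun x => v x t) 1 = 0) →
            lam * c ^ (lam - 1) *
                (∫ t in (0 : ℝ)..T, ∫ x in (0 : ℝ)..1,
                  (deriv (fun y => u y t) x) ^ 2 * (carlemanWeight T c lam t) ^ 2)
              + lam ^ 2 / 4 * c ^ (2 * lam - 2) *
                (∫ t in (0 : ℝ)..T, ∫ x in (0 : ℝ)..1,
                  (u x t) ^ 2 * (carlemanWeight T c lam t) ^ 2)
              - C2 * lam * (T + c) ^ lam *
                (∫ t in (0 : ℝ)..T, ∫ x in (0 : ℝ)..1,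
                  (deriv (fun y => v y t) x) ^ 2 * (carlemanWeight T c lam t) ^ 2)
              - C2 * lam * (T + c) ^ lam * Real.exp (2 * (T + c) ^ lam) *
                (∫ x in (0 : ℝ)..1, (u x 0) ^ 2)
            ≤ ∫ t in (0 : ℝ)..T, ∫ x in (0 : ℝ)..1,
                (deriv (fun s => u x s) t - deriv (fun y => deriv (fun z => u z t) y) x
                    + g x t * deriv (fun y => deriv (fun z => v z t) y) x) ^ 2
                  * (carlemanWeight T c lam t) ^ 2 := by
  have h1T : (0:ℝ) ≤ T := hT.le
  have hs : 1 ≤ Real.sqrt (1 + 2 * T) := by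
    have h := Real.sqrt_le_sqrt (show (1:ℝ) ≤ 1 + 2 * T by linarith)
    simpa using h
  have hc2 : 2 ≤ c := by linarith
  have hc0 : 0 < c := by linarith
  have hTc1 : 1 ≤ T + c := by linarith
  refine ⟨2, 3 * G ^ 2 + 1, one_le_two, by positivity, ?_⟩
  intro g hgC hgB lam hlam u v hu hv hbc
  have hlam2 : (2:ℝ) ≤ lam := hlam
  have hlam1 : (1:ℝ) ≤ lam := by linarith only [hlam2]
  have hlam10 : (0:ℝ) ≤ lam - 1 := by linarith only [hlam2]
  have hlam20 : (0:ℝ) ≤ lam - 2 := by linarith only [hlam2]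
  set Uu : ℝ × ℝ → ℝ := fun p => u p.1 p.2 with hUudef
  set Vv : ℝ × ℝ → ℝ := fun p => v p.1 p.2 with hVvdef
  set Gg : ℝ × ℝ → ℝ := fun p => g p.1 p.2 with hGgdef
  have hud : Differentiable ℝ Uu := hu.differentiable (by norm_num)
  have hvd : Differentiable ℝ Vv := hv.differentiable (by norm_num)
  have hgd : Differentiable ℝ Gg := hgC.differentiable one_ne_zero
  set b : ℝ → ℝ := fun t => T - t + c with hbdef
  set aa : ℝ → ℝ := fun t => lam * b t ^ (lam - 1) with haadef
  set aa' : ℝ → ℝ := fun t => -(lam * ((lam - 1) * b t ^ (lam - 2))) with haa'def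
  set W : ℝ → ℝ := fun t => Real.exp (2 * b t ^ lam) with hWdef
  -- rewrite the goal
  have hux : ∀ t x : ℝ, deriv (fun y => u y t) x = px Uu x t := fun t x => (hpx hud x t).deriv
  have hvx : ∀ t x : ℝ, deriv (fun y => v y t) x = px Vv x t := fun t x => (hpx hvd x t).deriv
  have hut : ∀ x t : ℝ, deriv (fun s => u x s) t = pt Uu x t := fun x t => (hpt hud x t).deriv
  have huxx : ∀ t x : ℝ, deriv (fun y => px Uu y t) x = pxx Uu x t :=
    fun t x => (hpxx hu x t).deriv
  have hvxx : ∀ t x : ℝ, deriv (fun y => px Vv y t) x = pxx Vv x t :=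
    fun t x => (hpxx hv x t).deriv
  have hWsq : ∀ t : ℝ, carlemanWeight T c lam t ^ 2 = W t := by
    intro t
    rw [hWdef, carlemanWeight, sq, ← Real.exp_add, hbdef]
    ring_nf
  simp only [hux, hvx] at hbc
  simp only [hux, hvx, hut, huxx, hvxx, hWsq]
  -- basic facts
  have hb_eq : ∀ t : ℝ, b t = T - t + c := fun t => by rw [hbdef]
  have hbpos : ∀ t ∈ Set.Icc (0:ℝ) T, 0 < b t := by
    intro t ht; rw [hb_eq]; linarith only [ht.1, ht.2, hc0]
  have hWpos : ∀ t : ℝ, 0 < W t := fun t => by rw [hWdef]; exact Real.exp_pos _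
  have haa_eq : ∀ t : ℝ, aa t = lam * b t ^ (lam - 1) := fun t => by rw [haadef]
  have haa'_eq : ∀ t : ℝ, aa' t = -(lam * ((lam - 1) * b t ^ (lam - 2))) :=
    fun t => by rw [haa'def]
  -- continuity atoms
  have cb : Continuous b := by rw [hbdef]; fun_prop
  have ca : Continuous aa := by
    rw [haadef]
    exact continuous_const.mul ((Real.continuous_rpow_const hlam10).comp cb)
  have ca' : Continuous aa' := by
    rw [haa'def]
    exact (continuous_const.mul
      (continuous_const.mul ((Real.continuous_rpow_const hlam20).comp cb))).neg
  have cW : Continuous W := by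
    rw [hWdef]
    exact Real.continuous_exp.comp
      (continuous_const.mul ((Real.continuous_rpow_const (by linarith only [hlam2])).comp cb))
  have cpu : Continuous fun p : ℝ × ℝ => u p.1 p.2 := hu.continuous
  have cpv : Continuous fun p : ℝ × ℝ => v p.1 p.2 := hv.continuous
  have cpg : Continuous fun p : ℝ × ℝ => g p.1 p.2 := hgC.continuous
  have cpF1 : Continuous fun p : ℝ × ℝ => px Uu p.1 p.2 := cont_px (hu.of_le one_le_two)
  have cpF2 : Continuous fun p : ℝ × ℝ => pxx Uu p.1 p.2 := cont_pxx hu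
  have cpFt : Continuous fun p : ℝ × ℝ => pt Uu p.1 p.2 := cont_pt (hu.of_le one_le_two)
  have cpV1 : Continuous fun p : ℝ × ℝ => px Vv p.1 p.2 := cont_px (hv.of_le one_le_two)
  have cpV2 : Continuous fun p : ℝ × ℝ => pxx Vv p.1 p.2 := cont_pxx hv
  have cpGx : Continuous fun p : ℝ × ℝ => px Gg p.1 p.2 := cont_px hgC
  -- the integrand functions
  set q1 : ℝ → ℝ → ℝ := fun x t => 2 * aa t * W t * (u x t * pt Uu x t) with hq1
  set q2 : ℝ → ℝ → ℝ := fun x t => -(2 * aa t * W t * (u x t * pxx Uu x t)) with hq2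
  set q3 : ℝ → ℝ → ℝ := fun x t => 2 * aa t * W t * (u x t * (g x t * pxx Vv x t)) with hq3
  set q4 : ℝ → ℝ → ℝ := fun x t => -(aa t ^ 2 * (u x t ^ 2 * W t)) with hq4
  set A1 : ℝ → ℝ → ℝ := fun x t => (2 * aa t ^ 2 - aa' t) * W t * u x t ^ 2 with hA1
  set A2 : ℝ → ℝ → ℝ := fun x t => 2 * aa t * W t * px Uu x t ^ 2 with hA2
  set A3 : ℝ → ℝ → ℝ := fun x t =>
    (-(2 * aa t * W t)) * (px Uu x t * g x t * px Vv x t + u x t * px Gg x t * px Vv x t)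
    with hA3
  set B3 : ℝ → ℝ → ℝ := fun x t =>
    -(aa t * W t * px Uu x t ^ 2 + aa t ^ 2 / 2 * W t * u x t ^ 2
      + (G ^ 2 * aa t + 2 * G ^ 2) * W t * px Vv x t ^ 2) with hB3
  set Cf : ℝ → ℝ → ℝ := fun x t =>
    lam * c ^ (lam - 1) * (px Uu x t ^ 2 * W t) + lam ^ 2 / 4 * c ^ (2 * lam - 2) *
      (u x t ^ 2 * W t) + (-((3 * G ^ 2 + 1) * lam * (T + c) ^ lam)) * (px Vv x t ^ 2 * W t)
    with hCf
  have cq1 : Continuous fun p : ℝ × ℝ => q1 p.1 p.2 := by simp only [hq1]; fun_prop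
  have cq2 : Continuous fun p : ℝ × ℝ => q2 p.1 p.2 := by simp only [hq2]; fun_prop
  have cq3 : Continuous fun p : ℝ × ℝ => q3 p.1 p.2 := by simp only [hq3]; fun_prop
  have cq4 : Continuous fun p : ℝ × ℝ => q4 p.1 p.2 := by simp only [hq4]; fun_prop
  have cA1 : Continuous fun p : ℝ × ℝ => A1 p.1 p.2 := by simp only [hA1]; fun_prop
  have cA2 : Continuous fun p : ℝ × ℝ => A2 p.1 p.2 := by simp only [hA2]; fun_prop
  have cA3 : Continuous fun p : ℝ × ℝ => A3 p.1 p.2 := by simp only [hA3]; fun_prop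
  have cB3 : Continuous fun p : ℝ × ℝ => B3 p.1 p.2 := by simp only [hB3]; fun_prop
  have cCf : Continuous fun p : ℝ × ℝ => Cf p.1 p.2 := by simp only [hCf]; fun_prop
  -- ===== integration by parts in x (A) =====
  have hA : ∀ t ∈ Set.Icc (0:ℝ) T,
      (∫ x in (0:ℝ)..1, (u x t * pxx Uu x t)) = -∫ x in (0:ℝ)..1, px Uu x t ^ 2 := by
    intro t ht
    have hder : ∀ x ∈ Set.uIcc (0:ℝ) 1, HasDerivAt (fun y => u y t * px Uu y t)
        (px Uu x t ^ 2 + u x t * pxx Uu x t) x := by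
      intro x _
      have h := (hpx hud x t).mul (hpxx hu x t)
      refine h.congr_deriv ?_
      ring
    have hftc := intervalIntegral.integral_eq_sub_of_hasDerivAt hder
      (cintx (h := fun x t => px Uu x t ^ 2 + u x t * pxx Uu x t) (by fun_prop) t)
    rw [(hbc t ht).2.1, (hbc t ht).1] at hftc
    rw [intervalIntegral.integral_add (cintx (h := fun x t => px Uu x t ^ 2) (by fun_prop) t)
      (cintx (h := fun x t => u x t * pxx Uu x t) (by fun_prop) t)] at hftc
    simp only [mul_zero, sub_zero] at hftc
    linarith only [hftc]
  -- ===== integration by parts in x (B) =====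
  have hB : ∀ t ∈ Set.Icc (0:ℝ) T,
      (∫ x in (0:ℝ)..1, (u x t * (g x t * pxx Vv x t)))
        = -∫ x in (0:ℝ)..1,
            (px Uu x t * g x t * px Vv x t + u x t * px Gg x t * px Vv x t) := by
    intro t ht
    have hder : ∀ x ∈ Set.uIcc (0:ℝ) 1, HasDerivAt (fun y => u y t * g y t * px Vv y t)
        ((px Uu x t * g x t * px Vv x t + u x t * px Gg x t * px Vv x t)
          + u x t * (g x t * pxx Vv x t)) x := by
      intro x _
      have h := ((hpx hud x t).mul (hpx hgd x t)).mul (hpxx hv x t)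
      refine h.congr_deriv ?_
      simp only [Pi.mul_apply, Uu, Gg]; ring
    have hftc := intervalIntegral.integral_eq_sub_of_hasDerivAt hder
      (cintx (h := fun x t => (px Uu x t * g x t * px Vv x t + u x t * px Gg x t * px Vv x t)
        + u x t * (g x t * pxx Vv x t)) (by fun_prop) t)
    rw [(hbc t ht).2.2.2, (hbc t ht).2.2.1] at hftc
    rw [intervalIntegral.integral_add
      (cintx (h := fun x t => px Uu x t * g x t * px Vv x t + u x t * px Gg x t * px Vv x t)
        (by fun_prop) t)
      (cintx (h := fun x t => u x t * (g x t * pxx Vv x t)) (by fun_prop) t)] at hftc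
    simp only [mul_zero, sub_zero] at hftc
    linarith only [hftc]
  -- ===== FTC in t (C) =====
  have hC : ∀ x ∈ Set.Icc (0:ℝ) 1,
      (∫ t in (0:ℝ)..T, ((aa' t - 2 * aa t ^ 2) * W t * u x t ^ 2 + q1 x t))
        = aa T * W T * u x T ^ 2 - aa 0 * W 0 * u x 0 ^ 2 := by
    intro x _
    have hder : ∀ t ∈ Set.uIcc (0:ℝ) T, HasDerivAt (fun s => aa s * W s * u x s ^ 2)
        ((aa' t - 2 * aa t ^ 2) * W t * u x t ^ 2 + q1 x t) t := by
      intro t ht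
      rw [Set.uIcc_of_le h1T] at ht
      have hbt : 0 < b t := hbpos t ht
      have hb' : HasDerivAt b (-1) t := by
        rw [hbdef]; simpa using ((hasDerivAt_id t).const_sub T).add_const c
      have hrp1 : HasDerivAt (fun s => b s ^ (lam - 1))
          (-((lam - 1) * b t ^ (lam - 2))) t := by
        have h0 := (Real.hasDerivAt_rpow_const (p := lam - 1) (Or.inl hbt.ne')).comp t hb'
        refine h0.congr_deriv ?_
        rw [show lam - 1 - 1 = lam - 2 by ring]
        ring
      have haD : HasDerivAt aa (aa' t) t := by
        rw [haadef, haa'def]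
        have h1 := hrp1.const_mul lam
        refine h1.congr_deriv ?_
        ring
      have hrpl : HasDerivAt (fun s => b s ^ lam) (-(lam * b t ^ (lam - 1))) t := by
        have h0 := (Real.hasDerivAt_rpow_const (p := lam) (Or.inl hbt.ne')).comp t hb'
        refine h0.congr_deriv ?_
        ring
      have hWD : HasDerivAt W (-2 * aa t * W t) t := by
        rw [hWdef, haadef]
        have h1 := (hrpl.const_mul 2).exp
        convert h1 using 1
        ring
      have hu2 : HasDerivAt (fun s => u x s ^ 2) (2 * u x t * pt Uu x t) t := by
        have h2 := (hpt hud x t).pow 2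
        refine h2.congr_deriv ?_
        simp [Uu]
      have h3 := (haD.mul hWD).mul hu2
      rw [hq1]
      refine h3.congr_deriv ?_
      simp only [Pi.mul_apply]; ring
    have hint : IntervalIntegrable
        (fun t => (aa' t - 2 * aa t ^ 2) * W t * u x t ^ 2 + q1 x t) volume 0 T :=
      cintt (h := fun x t => (aa' t - 2 * aa t ^ 2) * W t * u x t ^ 2 + q1 x t)
        (by simp only [hq1]; fun_prop) x
    simpa using intervalIntegral.integral_eq_sub_of_hasDerivAt hder hint
  -- ===== step 1 : pointwise square bound =====
  have step1 : (∫ t in (0:ℝ)..T, ∫ x in (0:ℝ)..1, (q1 x t + q2 x t + q3 x t + q4 x t))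
      ≤ ∫ t in (0:ℝ)..T, ∫ x in (0:ℝ)..1,
          (pt Uu x t - pxx Uu x t + g x t * pxx Vv x t) ^ 2 * W t := by
    apply Jmono h1T (by fun_prop) (by fun_prop)
    intro x _ t _
    simp only [hq1, hq2, hq3, hq4]
    exact ptwise1 (aa t) (W t) (u x t) (pt Uu x t) (pxx Uu x t) (g x t) (pxx Vv x t)
      (hWpos t)
  -- ===== step 2 : splitting =====
  have e3 := Jadd (T := T) (h := q1) (k := q2) cq1 cq2
  have e2 := Jadd (T := T) (h := fun x t => q1 x t + q2 x t) (k := q3) (by fun_prop) cq3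
  have e1 := Jadd (T := T) (h := fun x t => q1 x t + q2 x t + q3 x t) (k := q4)
    (by fun_prop) cq4
  have Esplit : (∫ t in (0:ℝ)..T, ∫ x in (0:ℝ)..1, (q1 x t + q2 x t + q3 x t + q4 x t))
      = (∫ t in (0:ℝ)..T, ∫ x in (0:ℝ)..1, q1 x t)
        + (∫ t in (0:ℝ)..T, ∫ x in (0:ℝ)..1, q2 x t)
        + (∫ t in (0:ℝ)..T, ∫ x in (0:ℝ)..1, q3 x t)
        + (∫ t in (0:ℝ)..T, ∫ x in (0:ℝ)..1, q4 x t) := by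
    linarith only [e1, e2, e3]
  -- ===== step 3 : q2 via (A) =====
  have F3 : (∫ t in (0:ℝ)..T, ∫ x in (0:ℝ)..1, q2 x t)
      = ∫ t in (0:ℝ)..T, ∫ x in (0:ℝ)..1, A2 x t := by
    apply intervalIntegral.integral_congr
    intro t ht
    rw [Set.uIcc_of_le h1T] at ht
    simp only [hq2, hA2]
    have ee : (fun x : ℝ => -(2 * aa t * W t * (u x t * pxx Uu x t)))
        = fun x : ℝ => -(2 * aa t * W t) * (u x t * pxx Uu x t) := by funext y; ring
    rw [ee, intervalIntegral.integral_const_mul, hA t ht,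
      intervalIntegral.integral_const_mul]
    ring
  -- ===== step 4 : q3 via (B) =====
  have F4 : (∫ t in (0:ℝ)..T, ∫ x in (0:ℝ)..1, q3 x t)
      = ∫ t in (0:ℝ)..T, ∫ x in (0:ℝ)..1, A3 x t := by
    apply intervalIntegral.integral_congr
    intro t ht
    rw [Set.uIcc_of_le h1T] at ht
    simp only [hq3, hA3]
    rw [intervalIntegral.integral_const_mul, hB t ht, intervalIntegral.integral_const_mul]
    ring
  -- ===== step 5 : q1 via (C) =====
  have F5 : (∫ t in (0:ℝ)..T, ∫ x in (0:ℝ)..1, q1 x t)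
      = (∫ x in (0:ℝ)..1, (aa T * W T * u x T ^ 2 - aa 0 * W 0 * u x 0 ^ 2))
        + ∫ t in (0:ℝ)..T, ∫ x in (0:ℝ)..1, A1 x t := by
    have sw1 := Jswap h1T (h := q1) cq1
    have sw2 := Jswap h1T (h := A1) cA1
    have hinner : ∀ x ∈ Set.Icc (0:ℝ) 1, (∫ t in (0:ℝ)..T, q1 x t)
        = (aa T * W T * u x T ^ 2 - aa 0 * W 0 * u x 0 ^ 2)
          + ∫ t in (0:ℝ)..T, A1 x t := by
      intro x hx
      have h0 := hC x hx
      rw [intervalIntegral.integral_add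
        (cintt (h := fun x t => (aa' t - 2 * aa t ^ 2) * W t * u x t ^ 2) (by fun_prop) x)
        (cintt (h := q1) cq1 x)] at h0
      have e0 : (fun t => A1 x t)
          = fun t => -((aa' t - 2 * aa t ^ 2) * W t * u x t ^ 2) := by
        funext s; simp only [hA1]; ring
      have e4 : (∫ t in (0:ℝ)..T, A1 x t)
          = -∫ t in (0:ℝ)..T, (aa' t - 2 * aa t ^ 2) * W t * u x t ^ 2 := by
        rw [e0, intervalIntegral.integral_neg]
      linarith only [h0, e4]
    have outer : (∫ x in (0:ℝ)..1, ∫ t in (0:ℝ)..T, q1 x t)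
        = ∫ x in (0:ℝ)..1, ((aa T * W T * u x T ^ 2 - aa 0 * W 0 * u x 0 ^ 2)
            + ∫ t in (0:ℝ)..T, A1 x t) := by
      apply intervalIntegral.integral_congr
      intro x hx
      rw [Set.uIcc_of_le (zero_le_one' ℝ)] at hx
      exact hinner x hx
    rw [intervalIntegral.integral_add
      (Continuous.intervalIntegrable (by fun_prop) 0 1)
      ((pcontx cA1).intervalIntegrable 0 1)] at outer
    linarith only [sw1, sw2, outer]
  -- ===== step 6 : cross-term bound =====
  have F6 : (∫ t in (0:ℝ)..T, ∫ x in (0:ℝ)..1, B3 x t)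
      ≤ ∫ t in (0:ℝ)..T, ∫ x in (0:ℝ)..1, A3 x t := by
    apply Jmono h1T cB3 cA3
    intro x hx t ht
    obtain ⟨hgb, hgd1⟩ := hgB x hx t ht
    have hGx : |px Gg x t| ≤ G := by
      have h1 : ‖fderiv ℝ Gg (x, t) ((1:ℝ), (0:ℝ))‖
          ≤ ‖fderiv ℝ Gg (x, t)‖ * ‖((1:ℝ), (0:ℝ))‖ :=
        ContinuousLinearMap.le_opNorm _ _
      have h2 : ‖((1:ℝ), (0:ℝ))‖ = 1 := by
        rw [Prod.norm_def]; norm_num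
      rw [h2, mul_one] at h1
      have h3 : |px Gg x t| = ‖fderiv ℝ Gg (x, t) ((1:ℝ), (0:ℝ))‖ := by
        rw [px, Real.norm_eq_abs]
      rw [h3]
      exact h1.trans hgd1
    have hg2 : g x t ^ 2 ≤ G ^ 2 := by
      nlinarith only [hgb, abs_nonneg (g x t), sq_abs (g x t)]
    have hGx2 : px Gg x t ^ 2 ≤ G ^ 2 := by
      nlinarith only [hGx, abs_nonneg (px Gg x t), sq_abs (px Gg x t)]
    have haN : 0 ≤ aa t := by
      rw [haa_eq]
      exact mul_nonneg (by linarith only [hlam2]) (Real.rpow_nonneg (hbpos t ht).le _)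
    simp only [hB3, hA3]
    exact ptwise6 G (aa t) (W t) (px Uu x t) (u x t) (px Vv x t) (g x t) (px Gg x t)
      hg2 hGx2 haN (hWpos t)
  -- ===== step 7 : second splitting =====
  have e3' := Jadd (T := T) (h := A1) (k := A2) cA1 cA2
  have e2' := Jadd (T := T) (h := fun x t => A1 x t + A2 x t) (k := B3) (by fun_prop) cB3
  have e1' := Jadd (T := T) (h := fun x t => A1 x t + A2 x t + B3 x t) (k := q4)
    (by fun_prop) cq4
  have Esplit2 : (∫ t in (0:ℝ)..T, ∫ x in (0:ℝ)..1, (A1 x t + A2 x t + B3 x t + q4 x t))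
      = (∫ t in (0:ℝ)..T, ∫ x in (0:ℝ)..1, A1 x t)
        + (∫ t in (0:ℝ)..T, ∫ x in (0:ℝ)..1, A2 x t)
        + (∫ t in (0:ℝ)..T, ∫ x in (0:ℝ)..1, B3 x t)
        + (∫ t in (0:ℝ)..T, ∫ x in (0:ℝ)..1, q4 x t) := by
    linarith only [e1', e2', e3']
  -- ===== step 8 : coefficient bounds =====
  have F7 : (∫ t in (0:ℝ)..T, ∫ x in (0:ℝ)..1, Cf x t)
      ≤ ∫ t in (0:ℝ)..T, ∫ x in (0:ℝ)..1, (A1 x t + A2 x t + B3 x t + q4 x t) := by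
    apply Jmono h1T cCf (by fun_prop)
    intro x _ t ht
    have hbt : 0 < b t := hbpos t ht
    have hble : c ≤ b t := by rw [hb_eq]; linarith only [ht.2]
    have hbub : b t ≤ T + c := by rw [hb_eq]; linarith only [ht.1]
    have halo : lam * c ^ (lam - 1) ≤ aa t := by
      rw [haa_eq]
      exact mul_le_mul_of_nonneg_left (Real.rpow_le_rpow hc0.le hble hlam10)
        (by linarith only [hlam2])
    have hahi : aa t ≤ lam * (T + c) ^ lam := by
      rw [haa_eq]
      have h1 : b t ^ (lam - 1) ≤ (T + c) ^ (lam - 1) :=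
        Real.rpow_le_rpow hbt.le hbub hlam10
      have h2 : (T + c) ^ (lam - 1) ≤ (T + c) ^ lam :=
        Real.rpow_le_rpow_of_exponent_le hTc1 (by linarith only [hlam2])
      exact mul_le_mul_of_nonneg_left (h1.trans h2) (by linarith only [hlam2])
    have hcc : c ^ (lam - 1) * c ^ (lam - 1) = c ^ (2 * lam - 2) := by
      rw [← Real.rpow_add hc0]; ring_nf
    have hcrN : (0:ℝ) ≤ c ^ (lam - 1) := Real.rpow_nonneg hc0.le _
    have ha2 : lam ^ 2 * c ^ (2 * lam - 2) ≤ aa t ^ 2 := by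
      nlinarith only [halo, hcc, mul_nonneg (show (0:ℝ) ≤ lam by linarith only [hlam2]) hcrN]
    have ha'N : aa' t ≤ 0 := by
      rw [haa'_eq]
      have : 0 ≤ lam * ((lam - 1) * b t ^ (lam - 2)) :=
        mul_nonneg (by linarith only [hlam2]) (mul_nonneg hlam10 (Real.rpow_nonneg hbt.le _))
      linarith only [this]
    have hone : 1 ≤ lam * (T + c) ^ lam := by
      have h1 : (1:ℝ) ≤ (T + c) ^ lam := Real.one_le_rpow hTc1 (by linarith only [hlam2])
      nlinarith only [h1, hlam2]
    have haN : 0 ≤ aa t :=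
      le_trans (mul_nonneg (by linarith only [hlam2]) hcrN) halo
    have hccN : (0:ℝ) ≤ c ^ (2 * lam - 2) := Real.rpow_nonneg hc0.le _
    simp only [hCf, hA1, hA2, hB3, hq4]
    have key := ptwise7 G lam (c ^ (lam - 1)) (c ^ (2 * lam - 2)) (lam * (T + c) ^ lam)
      (aa t) (aa' t) (W t) (px Uu x t) (u x t) (px Vv x t)
      halo ha2 ha'N hahi hone haN (hWpos t) hccN hG (by linarith only [hlam2])
    linarith only [key]
  -- ===== step 9 : expansion of Cf =====
  have s1 := Jsmul (T := T) (h := fun x t => px Uu x t ^ 2 * W t) (lam * c ^ (lam - 1))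
  have s2 := Jsmul (T := T) (h := fun x t => u x t ^ 2 * W t) (lam ^ 2 / 4 * c ^ (2 * lam - 2))
  have s3 := Jsmul (T := T) (h := fun x t => px Vv x t ^ 2 * W t)
    (-((3 * G ^ 2 + 1) * lam * (T + c) ^ lam))
  have e2'' := Jadd (T := T)
    (h := fun x t => lam * c ^ (lam - 1) * (px Uu x t ^ 2 * W t))
    (k := fun x t => lam ^ 2 / 4 * c ^ (2 * lam - 2) * (u x t ^ 2 * W t))
    (by fun_prop) (by fun_prop)
  have e1'' := Jadd (T := T)
    (h := fun x t => lam * c ^ (lam - 1) * (px Uu x t ^ 2 * W t)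
      + lam ^ 2 / 4 * c ^ (2 * lam - 2) * (u x t ^ 2 * W t))
    (k := fun x t => (-((3 * G ^ 2 + 1) * lam * (T + c) ^ lam)) * (px Vv x t ^ 2 * W t))
    (by fun_prop) (by fun_prop)
  have E3 : (∫ t in (0:ℝ)..T, ∫ x in (0:ℝ)..1, Cf x t)
      = lam * c ^ (lam - 1) * (∫ t in (0:ℝ)..T, ∫ x in (0:ℝ)..1, px Uu x t ^ 2 * W t)
        + lam ^ 2 / 4 * c ^ (2 * lam - 2)
          * (∫ t in (0:ℝ)..T, ∫ x in (0:ℝ)..1, u x t ^ 2 * W t)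
        + (-((3 * G ^ 2 + 1) * lam * (T + c) ^ lam))
          * (∫ t in (0:ℝ)..T, ∫ x in (0:ℝ)..1, px Vv x t ^ 2 * W t) := by
    simp only [hCf]
    linarith only [s1, s2, s3, e1'', e2'']
  -- ===== step 10 : boundary term bound =====
  have haTN : 0 ≤ aa T := by
    rw [haa_eq]
    exact mul_nonneg (by linarith only [hlam2])
      (Real.rpow_nonneg (hbpos T ⟨h1T, le_refl T⟩).le _)
  have hK0 : 0 ≤ ∫ x in (0:ℝ)..1, u x 0 ^ 2 :=
    intervalIntegral.integral_nonneg zero_le_one (fun x _ => sq_nonneg _)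
  have eB : (∫ x in (0:ℝ)..1, (aa T * W T * u x T ^ 2 - aa 0 * W 0 * u x 0 ^ 2))
      = aa T * W T * (∫ x in (0:ℝ)..1, u x T ^ 2)
        - aa 0 * W 0 * (∫ x in (0:ℝ)..1, u x 0 ^ 2) := by
    rw [intervalIntegral.integral_sub (Continuous.intervalIntegrable (by fun_prop) 0 1)
      (Continuous.intervalIntegrable (by fun_prop) 0 1),
      intervalIntegral.integral_const_mul, intervalIntegral.integral_const_mul]
  have hposT : 0 ≤ aa T * W T * ∫ x in (0:ℝ)..1, u x T ^ 2 :=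
    mul_nonneg (mul_nonneg haTN (hWpos T).le)
      (intervalIntegral.integral_nonneg zero_le_one (fun x _ => sq_nonneg _))
  have ha0 : aa 0 = lam * (T + c) ^ (lam - 1) := by
    rw [haa_eq, hb_eq]; norm_num
  have hW0 : W 0 = Real.exp (2 * (T + c) ^ lam) := by
    rw [hWdef]
    simp only
    rw [hb_eq]
    norm_num
  have hcoef0 : aa 0 * W 0
      ≤ (3 * G ^ 2 + 1) * lam * (T + c) ^ lam * Real.exp (2 * (T + c) ^ lam) := by
    rw [ha0, hW0]
    have h1 : lam * (T + c) ^ (lam - 1) ≤ lam * (T + c) ^ lam := by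
      have := Real.rpow_le_rpow_of_exponent_le hTc1 (show lam - 1 ≤ lam by linarith only [])
      exact mul_le_mul_of_nonneg_left this (by linarith only [hlam2])
    have h2 : (0:ℝ) < Real.exp (2 * (T + c) ^ lam) := Real.exp_pos _
    have h3 : (0:ℝ) ≤ lam * (T + c) ^ lam :=
      mul_nonneg (by linarith only [hlam2]) (Real.rpow_nonneg (by linarith only [hTc1]) _)
    have h4 := mul_le_mul_of_nonneg_right h1 h2.le
    have h5 : 0 ≤ G ^ 2 * (lam * (T + c) ^ lam) * Real.exp (2 * (T + c) ^ lam) :=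
      mul_nonneg (mul_nonneg (sq_nonneg G) h3) h2.le
    linarith only [h4, h5]
  have F8 : -((3 * G ^ 2 + 1) * lam * (T + c) ^ lam * Real.exp (2 * (T + c) ^ lam))
        * (∫ x in (0:ℝ)..1, u x 0 ^ 2)
      ≤ ∫ x in (0:ℝ)..1, (aa T * W T * u x T ^ 2 - aa 0 * W 0 * u x 0 ^ 2) := by
    rw [eB]
    linarith only [hposT, mul_le_mul_of_nonneg_right hcoef0 hK0]
  -- ===== conclusion =====
  linarith only [step1, Esplit, F3, F4, F5, F6, Esplit2, F7, E3, F8]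
end Jtools
end

section
/- Let M, M' > 0 and let r : ℝⁿ × ℝ → ℝ be C¹ in x with |r| ≤ M and |∇ₓr| ≤ M. Let u, m : ℝⁿ × ℝ → ℝ be of class C² in x and C¹ in t with |∇u(x,t)| ≤ M', |Δu(x,t)| ≤ M', |m(x,t)| ≤ M', and |∇m(x,t)| ≤ M' for all (x,t). Let 0 < δ ≤ 1 and let e₁, e₂ : ℝⁿ → ℝ be time-independent C² functions with |e₂(x)| ≤ δ, |∇e₁(x)| ≤ δ, |∇e₂(x)| ≤ δ, |Δe₁(x)| ≤ δ, and |Δe₂(x)| ≤ δ for all x. Then for every (x,t), |L₂(u + e₁, m + e₂)(x,t) − L₂(u,m)(x,t)| ≤ (1 + 6 M M' + 3 M) δ, where L₂(u,m)(x,t) = ∂ₜm − Δm − div(r m ∇u). -/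
open MeasureTheory EuclideanSpace InnerProductSpace

/-- The Laplacian of `f : ℝⁿ → ℝ`, defined as the sum of the pure second partial
derivatives in the coordinate directions. -/
noncomputable def lap {n : ℕ} (f : EuclideanSpace ℝ (Fin n) → ℝ)
    (x : EuclideanSpace ℝ (Fin n)) : ℝ :=
  ∑ i, iteratedFDeriv ℝ 2 f x ![EuclideanSpace.single i 1, EuclideanSpace.single i 1]

/-- The divergence of a vector field `F : ℝⁿ → ℝⁿ`. -/
noncomputable def diverg {n : ℕ}
    (F : EuclideanSpace ℝ (Fin n) → EuclideanSpace ℝ (Fin n))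
    (x : EuclideanSpace ℝ (Fin n)) : ℝ :=
  ∑ i, fderiv ℝ (fun y => F y i) x (EuclideanSpace.single i 1)

/-- The operator `L₂` of the second (Fokker–Planck) equation of the MFG system:
`L₂(u,m)(x,t) = ∂ₜm − Δm − div(r m ∇u)`. -/
noncomputable def L2 {n : ℕ} (r : EuclideanSpace ℝ (Fin n) → ℝ → ℝ)
    (u m : EuclideanSpace ℝ (Fin n) → ℝ → ℝ)
    (x : EuclideanSpace ℝ (Fin n)) (t : ℝ) : ℝ :=
  deriv (fun s => m x s) t - lap (fun y => m y t) x
    - diverg (fun y => (r y t * m y t) • gradient (fun z => u z t) y) x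


variable {n : ℕ}
local notation "E" => EuclideanSpace ℝ (Fin n)

lemma fderiv_eq_inner_gradient (f : E → ℝ) (x v : E) :
    fderiv ℝ f x v = ⟪gradient f x, v⟫_ℝ := by
  rw [gradient, toDual_symm_apply]

lemma gradient_apply_coord (f : E → ℝ) (x : E) (i : Fin n) :
    gradient f x i = fderiv ℝ f x (EuclideanSpace.single i 1) := by
  rw [fderiv_eq_inner_gradient, EuclideanSpace.inner_single_right]
  simp

lemma basis_decomp (v : E) : ∑ i, v i • EuclideanSpace.single (𝕜 := ℝ) i (1:ℝ) = v := by
  ext j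
  have h : (∑ i, v i • EuclideanSpace.single (𝕜 := ℝ) i (1:ℝ)) j
      = ∑ i, v i * (EuclideanSpace.single (𝕜 := ℝ) i (1:ℝ)) j :=
    by simp [EuclideanSpace.single_apply, Pi.single_apply]
  rw [h]
  simp [EuclideanSpace.single_apply]

lemma fderiv_apply_bound (f : E → ℝ) (x v : E) :
    |fderiv ℝ f x v| ≤ ‖gradient f x‖ * ‖v‖ := by
  rw [fderiv_eq_inner_gradient]
  exact abs_real_inner_le_norm _ _

lemma grad_comp_eq (w : E → ℝ) (hw : Differentiable ℝ w) (i : Fin n) :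
    (fun y => gradient w y i) = fun y => fderiv ℝ w y (EuclideanSpace.single i 1) := by
  funext y; exact gradient_apply_coord w y i

lemma grad_comp_diff (w : E → ℝ) (hw : ContDiff ℝ 2 w) (i : Fin n) :
    Differentiable ℝ (fun y => gradient w y i) := by
  rw [grad_comp_eq w (hw.differentiable (by norm_num)) i]
  have h1 : Differentiable ℝ (fun y => fderiv ℝ w y) :=
    (hw.fderiv_right (m := 1) (by norm_num)).differentiable one_ne_zero
  exact fun y => ((ContinuousLinearMap.apply ℝ ℝ
    (EuclideanSpace.single i (1:ℝ))).differentiableAt).comp y (h1 y)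

lemma diverg_grad_eq_lap (w : E → ℝ) (hw : ContDiff ℝ 2 w) (x : E) :
    diverg (fun y => gradient w y) x = lap w x := by
  unfold diverg lap
  refine Finset.sum_congr rfl fun i _ => ?_
  rw [grad_comp_eq w (hw.differentiable (by norm_num)) i]
  have h1 : DifferentiableAt ℝ (fun y => fderiv ℝ w y) x :=
    ((hw.fderiv_right (m := 1) (by norm_num)).differentiable one_ne_zero) x
  have : fderiv ℝ (fun y => fderiv ℝ w y (EuclideanSpace.single i 1)) x
      = (ContinuousLinearMap.apply ℝ ℝ (EuclideanSpace.single i (1:ℝ))).comp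
        (fderiv ℝ (fderiv ℝ w) x) := by
    exact ((ContinuousLinearMap.apply ℝ ℝ
      (EuclideanSpace.single i (1:ℝ))).hasFDerivAt.comp x h1.hasFDerivAt).fderiv
  rw [this, iteratedFDeriv_two_apply]
  simp

lemma diverg_smul (f : E → ℝ) (G : E → E) (x : E) (hf : DifferentiableAt ℝ f x)
    (hG : ∀ i, DifferentiableAt ℝ (fun y => G y i) x) :
    diverg (fun y => f y • G y) x = fderiv ℝ f x (G x) + f x * diverg G x := by
  unfold diverg
  have h : ∀ i : Fin n, fderiv ℝ (fun y => (f y • G y) i) x (EuclideanSpace.single i 1)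
      = G x i * fderiv ℝ f x (EuclideanSpace.single i 1)
        + f x * fderiv ℝ (fun y => G y i) x (EuclideanSpace.single i 1) := by
    intro i
    have : (fun y => (f y • G y) i) = fun y => f y * G y i := by
      funext y; simp [PiLp.smul_apply]
    rw [this, fderiv_fun_mul hf (hG i)]
    simp only [ContinuousLinearMap.add_apply, ContinuousLinearMap.smul_apply, smul_eq_mul]
    ring
  simp_rw [h]
  rw [Finset.sum_add_distrib, ← Finset.mul_sum]
  congr 1
  have : fderiv ℝ f x (G x) = fderiv ℝ f x (∑ i, G x i • EuclideanSpace.single i (1:ℝ)) := by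
    rw [basis_decomp]
  rw [this, map_sum]
  simp [mul_comm]

lemma diverg_add (G H : E → E) (x : E)
    (hG : ∀ i, DifferentiableAt ℝ (fun y => G y i) x)
    (hH : ∀ i, DifferentiableAt ℝ (fun y => H y i) x) :
    diverg (fun y => G y + H y) x = diverg G x + diverg H x := by
  unfold diverg
  rw [← Finset.sum_add_distrib]
  refine Finset.sum_congr rfl fun i _ => ?_
  have : (fun y => (G y + H y) i) = fun y => G y i + H y i := by
    funext y; simp [PiLp.add_apply]
  rw [this, fderiv_fun_add (hG i) (hH i)]
  simp

lemma lap_add (f g : E → ℝ) (hf : ContDiff ℝ 2 f) (hg : ContDiff ℝ 2 g) (x : E) :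
    lap (fun y => f y + g y) x = lap f x + lap g x := by
  unfold lap
  rw [← Finset.sum_add_distrib]
  refine Finset.sum_congr rfl fun i _ => ?_
  have : (fun y => f y + g y) = f + g := rfl
  rw [this, iteratedFDeriv_add_apply (by exact_mod_cast hf.contDiffAt) (by exact_mod_cast hg.contDiffAt)]
  simp

lemma gradient_add' (f g : E → ℝ) (x : E) (hf : DifferentiableAt ℝ f x)
    (hg : DifferentiableAt ℝ g x) :
    gradient (fun y => f y + g y) x = gradient f x + gradient g x := by
  ext i
  have h1 : gradient (fun y => f y + g y) x i = fderiv ℝ (fun y => f y + g y) x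
      (EuclideanSpace.single i 1) := gradient_apply_coord _ x i
  rw [h1, fderiv_fun_add hf hg]
  have : (gradient f x + gradient g x) i = gradient f x i + gradient g x i := rfl
  rw [this, gradient_apply_coord, gradient_apply_coord]
  simp

lemma div_field_bound (f g w : E → ℝ) (x : E) (hf : DifferentiableAt ℝ f x)
    (hg : DifferentiableAt ℝ g x) (hw : ContDiff ℝ 2 w) :
    |diverg (fun y => (f y * g y) • gradient w y) x|
      ≤ (|f x| * ‖gradient g x‖ + |g x| * ‖gradient f x‖) * ‖gradient w x‖
        + |f x| * |g x| * |lap w x| := by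
  have hfg : DifferentiableAt ℝ (fun y => f y * g y) x := hf.mul hg
  rw [diverg_smul _ _ x hfg (fun i => (grad_comp_diff w hw i) x),
    diverg_grad_eq_lap w hw x]
  have hmul : fderiv ℝ (fun y => f y * g y) x (gradient w x)
      = f x * fderiv ℝ g x (gradient w x) + g x * fderiv ℝ f x (gradient w x) := by
    rw [fderiv_fun_mul hf hg]
    simp only [ContinuousLinearMap.add_apply, ContinuousLinearMap.smul_apply, smul_eq_mul]
  calc |fderiv ℝ (fun y => f y * g y) x (gradient w x) + f x * g x * lap w x|
      ≤ |fderiv ℝ (fun y => f y * g y) x (gradient w x)| + |f x * g x * lap w x| :=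
        abs_add_le _ _
    _ ≤ (|f x| * ‖gradient g x‖ + |g x| * ‖gradient f x‖) * ‖gradient w x‖
        + |f x| * |g x| * |lap w x| := by
        rw [hmul]
        refine add_le_add ?_ (le_of_eq (by rw [abs_mul, abs_mul]))
        calc |f x * fderiv ℝ g x (gradient w x) + g x * fderiv ℝ f x (gradient w x)|
            ≤ |f x * fderiv ℝ g x (gradient w x)| + |g x * fderiv ℝ f x (gradient w x)| :=
              abs_add_le _ _
          _ ≤ |f x| * (‖gradient g x‖ * ‖gradient w x‖)
              + |g x| * (‖gradient f x‖ * ‖gradient w x‖) := by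
              rw [abs_mul, abs_mul]
              gcongr
              · exact fderiv_apply_bound g x _
              · exact fderiv_apply_bound f x _
          _ = (|f x| * ‖gradient g x‖ + |g x| * ‖gradient f x‖) * ‖gradient w x‖ := by ring

lemma field_comp_diff (f g w : E → ℝ) (hf : Differentiable ℝ f) (hg : Differentiable ℝ g)
    (hw : ContDiff ℝ 2 w) (i : Fin n) :
    Differentiable ℝ (fun y => ((f y * g y) • gradient w y) i) := by
  have h : (fun y => ((f y * g y) • gradient w y) i)
      = fun y => (f y * g y) * gradient w y i := by
    funext y; simp [PiLp.smul_apply]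
  rw [h]
  exact (hf.mul hg).mul (grad_comp_diff w hw i)

lemma abs_final (p q F a b c d δ M M' : ℝ) (h0 : |a| ≤ δ) (h1 : |b| ≤ 3*M*M'*δ)
    (h2 : |c| ≤ 3*M*M'*δ) (h3 : |d| ≤ 3*M*δ) :
    |(p - (q + a) - (F + (b + (c + d)))) - (p - q - F)| ≤ (1 + 6*M*M' + 3*M)*δ := by
  have h : (p - (q + a) - (F + (b + (c + d)))) - (p - q - F) = -(a+(b+(c+d))) := by ring
  rw [h, abs_neg]
  have h4 : |a + (b + (c + d))| ≤ |a| + (|b| + (|c| + |d|)) :=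
    (abs_add_le _ _).trans (add_le_add le_rfl ((abs_add_le _ _).trans
      (add_le_add le_rfl (abs_add_le _ _))))
  nlinarith

private lemma main_aux {n : ℕ} (M M' : ℝ) (hM : 0 < M) (hM' : 0 < M')
    (r : EuclideanSpace ℝ (Fin n) → ℝ → ℝ)
    (hrx : ∀ t, ContDiff ℝ 1 (fun x => r x t))
    (hrbd : ∀ x t, |r x t| ≤ M)
    (hgradr : ∀ x t, ‖gradient (fun y => r y t) x‖ ≤ M)
    (u m : EuclideanSpace ℝ (Fin n) → ℝ → ℝ)
    (hux : ∀ t, ContDiff ℝ 2 (fun x => u x t))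
    (hut : ∀ x, Differentiable ℝ (fun t => u x t))
    (hmx : ∀ t, ContDiff ℝ 2 (fun x => m x t))
    (hmt : ∀ x, Differentiable ℝ (fun t => m x t))
    (hgradu : ∀ x t, ‖gradient (fun y => u y t) x‖ ≤ M')
    (hlapu : ∀ x t, |lap (fun y => u y t) x| ≤ M')
    (hmbd : ∀ x t, |m x t| ≤ M')
    (hgradm : ∀ x t, ‖gradient (fun y => m y t) x‖ ≤ M')
    (δ : ℝ) (hδ0 : 0 < δ) (hδ1 : δ ≤ 1)
    (e₁ e₂ : EuclideanSpace ℝ (Fin n) → ℝ)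
    (he₁ : ContDiff ℝ 2 e₁) (he₂ : ContDiff ℝ 2 e₂)
    (he₂bd : ∀ x, |e₂ x| ≤ δ)
    (hgrade₁ : ∀ x, ‖gradient e₁ x‖ ≤ δ) (hgrade₂ : ∀ x, ‖gradient e₂ x‖ ≤ δ)
    (hlape₁ : ∀ x, |lap e₁ x| ≤ δ) (hlape₂ : ∀ x, |lap e₂ x| ≤ δ) :
    ∀ x t,
      |(deriv (fun s => m x s + e₂ x) t - lap (fun y => m y t + e₂ y) x
          - diverg (fun y => (r y t * (m y t + e₂ y)) •
              gradient (fun z => u z t + e₁ z) y) x)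
        - (deriv (fun s => m x s) t - lap (fun y => m y t) x
          - diverg (fun y => (r y t * m y t) • gradient (fun z => u z t) y) x)|
        ≤ (1 + 6 * M * M' + 3 * M) * δ := by
  intro x t
  set R : EuclideanSpace ℝ (Fin n) → ℝ := fun y => r y t with hR
  set U : EuclideanSpace ℝ (Fin n) → ℝ := fun y => u y t with hU
  set Mm : EuclideanSpace ℝ (Fin n) → ℝ := fun y => m y t with hMm
  have hRd : Differentiable ℝ R := (hrx t).differentiable (by norm_num)
  have hUd : Differentiable ℝ U := (hux t).differentiable (by norm_num)
  have hMd : Differentiable ℝ Mm := (hmx t).differentiable (by norm_num)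
  have he₁d : Differentiable ℝ e₁ := he₁.differentiable (by norm_num)
  have he₂d : Differentiable ℝ e₂ := he₂.differentiable (by norm_num)
  -- time derivative
  have hderiv : deriv (fun s => m x s + e₂ x) t = deriv (fun s => m x s) t :=
    deriv_add_const _
  -- laplacian
  have hlap : lap (fun y => m y t + e₂ y) x = lap Mm x + lap e₂ x :=
    lap_add Mm e₂ (hmx t) he₂ x
  -- divergence decomposition
  have hfield : (fun y => (r y t * (m y t + e₂ y)) • gradient (fun z => u z t + e₁ z) y)
      = fun y => (R y * Mm y) • gradient U y
        + ((R y * Mm y) • gradient e₁ y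
          + ((R y * e₂ y) • gradient U y + (R y * e₂ y) • gradient e₁ y)) := by
    funext y
    rw [gradient_add' U e₁ y (hUd y) (he₁d y)]
    rw [mul_add, add_smul, smul_add, smul_add]
    abel
  have hc1 := fun i => field_comp_diff R Mm U hRd hMd (hux t) i
  have hc2 := fun i => field_comp_diff R Mm e₁ hRd hMd he₁ i
  have hc3 := fun i => field_comp_diff R e₂ U hRd he₂d (hux t) i
  have hc4 := fun i => field_comp_diff R e₂ e₁ hRd he₂d he₁ i
  have hdiv : diverg (fun y => (r y t * (m y t + e₂ y)) •
        gradient (fun z => u z t + e₁ z) y) x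
      = diverg (fun y => (R y * Mm y) • gradient U y) x
        + (diverg (fun y => (R y * Mm y) • gradient e₁ y) x
          + (diverg (fun y => (R y * e₂ y) • gradient U y) x
            + diverg (fun y => (R y * e₂ y) • gradient e₁ y) x)) := by
    rw [hfield]
    rw [diverg_add _ _ x (fun i => hc1 i x) (fun i => by
      have h : (fun y => ((R y * Mm y) • gradient e₁ y
          + ((R y * e₂ y) • gradient U y + (R y * e₂ y) • gradient e₁ y)) i)
          = fun y => ((R y * Mm y) • gradient e₁ y) i
            + (((R y * e₂ y) • gradient U y) i + ((R y * e₂ y) • gradient e₁ y) i) := by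
        funext y; rfl
      rw [h]
      exact ((hc2 i x).add ((hc3 i x).add (hc4 i x))))]
    congr 1
    rw [diverg_add _ _ x (fun i => hc2 i x) (fun i => by
      have h : (fun y => ((R y * e₂ y) • gradient U y + (R y * e₂ y) • gradient e₁ y) i)
          = fun y => ((R y * e₂ y) • gradient U y) i + ((R y * e₂ y) • gradient e₁ y) i := by
        funext y; rfl
      rw [h]
      exact ((hc3 i x).add (hc4 i x)))]
    congr 1
    exact diverg_add _ _ x (fun i => hc3 i x) (fun i => hc4 i x)
  rw [hderiv, hlap, hdiv]
  have hb1 := div_field_bound R Mm e₁ x (hRd x) (hMd x) he₁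
  have hb2 := div_field_bound R e₂ U x (hRd x) (he₂d x) (hux t)
  have hb3 := div_field_bound R e₂ e₁ x (hRd x) (he₂d x) he₁
  have hRx : |R x| ≤ M := hrbd x t
  have hgR : ‖gradient R x‖ ≤ M := hgradr x t
  have hgU : ‖gradient U x‖ ≤ M' := hgradu x t
  have hlU : |lap U x| ≤ M' := hlapu x t
  have hMx : |Mm x| ≤ M' := hmbd x t
  have hgM : ‖gradient Mm x‖ ≤ M' := hgradm x t
  have e1 : |diverg (fun y => (R y * Mm y) • gradient e₁ y) x| ≤ 3 * M * M' * δ := by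
    refine hb1.trans ?_
    calc (|R x| * ‖gradient Mm x‖ + |Mm x| * ‖gradient R x‖) * ‖gradient e₁ x‖
          + |R x| * |Mm x| * |lap e₁ x|
        ≤ (M * M' + M' * M) * δ + M * M' * δ := by
          gcongr <;> first
            | exact hRx | exact hgR | exact hMx | exact hgM
            | exact hgrade₁ x | exact hlape₁ x
      _ = 3 * M * M' * δ := by ring
  have e2 : |diverg (fun y => (R y * e₂ y) • gradient U y) x| ≤ 3 * M * M' * δ := by
    refine hb2.trans ?_
    calc (|R x| * ‖gradient e₂ x‖ + |e₂ x| * ‖gradient R x‖) * ‖gradient U x‖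
          + |R x| * |e₂ x| * |lap U x|
        ≤ (M * δ + δ * M) * M' + M * δ * M' := by
          gcongr <;> first
            | exact hRx | exact hgR | exact hgU | exact hlU
            | exact he₂bd x | exact hgrade₂ x
      _ = 3 * M * M' * δ := by ring
  have e3 : |diverg (fun y => (R y * e₂ y) • gradient e₁ y) x| ≤ 3 * M * δ := by
    refine hb3.trans ?_
    calc (|R x| * ‖gradient e₂ x‖ + |e₂ x| * ‖gradient R x‖) * ‖gradient e₁ x‖
          + |R x| * |e₂ x| * |lap e₁ x|
        ≤ (M * δ + δ * M) * δ + M * δ * δ := by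
          gcongr <;> first
            | exact hRx | exact hgR
            | exact he₂bd x | exact hgrade₂ x | exact hgrade₁ x | exact hlape₁ x
      _ ≤ 3 * M * δ := by
          nlinarith [mul_nonneg (mul_nonneg hM.le hδ0.le) (sub_nonneg.mpr hδ1)]
  exact abs_final _ _ _ _ _ _ _ _ _ _ (hlape₂ x) e1 e2 e3


/-- Pointwise bound for the perturbation of `L₂` caused by time-independent errors
`e₁`, `e₂` in the initial data. -/
theorem stmt13 {n : ℕ} (M M' : ℝ) (hM : 0 < M) (hM' : 0 < M')
    (r : EuclideanSpace ℝ (Fin n) → ℝ → ℝ)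
    (hrx : ∀ t, ContDiff ℝ 1 (fun x => r x t))
    (hrbd : ∀ x t, |r x t| ≤ M)
    (hgradr : ∀ x t, ‖gradient (fun y => r y t) x‖ ≤ M)
    (u m : EuclideanSpace ℝ (Fin n) → ℝ → ℝ)
    (hux : ∀ t, ContDiff ℝ 2 (fun x => u x t))
    (hut : ∀ x, Differentiable ℝ (fun t => u x t))
    (hmx : ∀ t, ContDiff ℝ 2 (fun x => m x t))
    (hmt : ∀ x, Differentiable ℝ (fun t => m x t))
    (hgradu : ∀ x t, ‖gradient (fun y => u y t) x‖ ≤ M')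
    (hlapu : ∀ x t, |lap (fun y => u y t) x| ≤ M')
    (hmbd : ∀ x t, |m x t| ≤ M')
    (hgradm : ∀ x t, ‖gradient (fun y => m y t) x‖ ≤ M')
    (δ : ℝ) (hδ0 : 0 < δ) (hδ1 : δ ≤ 1)
    (e₁ e₂ : EuclideanSpace ℝ (Fin n) → ℝ)
    (he₁ : ContDiff ℝ 2 e₁) (he₂ : ContDiff ℝ 2 e₂)
    (he₂bd : ∀ x, |e₂ x| ≤ δ)
    (hgrade₁ : ∀ x, ‖gradient e₁ x‖ ≤ δ) (hgrade₂ : ∀ x, ‖gradient e₂ x‖ ≤ δ)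
    (hlape₁ : ∀ x, |lap e₁ x| ≤ δ) (hlape₂ : ∀ x, |lap e₂ x| ≤ δ) :
    ∀ x t,
      |L2 r (fun y s => u y s + e₁ y) (fun y s => m y s + e₂ y) x t - L2 r u m x t|
        ≤ (1 + 6 * M * M' + 3 * M) * δ := by
  intro x t
  simp only [L2]
  exact main_aux M M' hM hM' r hrx hrbd hgradr u m hux hut hmx hmt hgradu hlapu hmbd
    hgradm δ hδ0 hδ1 e₁ e₂ he₁ he₂ he₂bd hgrade₁ hgrade₂ hlape₁ hlape₂ x t
end
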